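/- Let X₁, X₂, … be i.i.d. real random variables whose common distribution is regularly varying: ρⁿ P(b_n^{-1} X₁ ∈ ·) converges vaguely on [-∞,∞]\{0} to ν_α, where ν_α(dx) = βα x^{-α-1}1(x>0)dx + (1-β)α(-x)^{-α-1}1(x<0)dx. Then the law of the sequence X = (X₁, X₂, …) is regularly varying on ℝ^ℕ \ {0_∞} with limit measure λ_iid concentrated on the axes: λ_iid(dx) = Σ_{i=1}^∞ ⊗_{j<i} δ₀(dx_j) ⊗ ν_α(dx_i) ⊗_{j>i} δ₀(dx_j); i.e. ρⁿ P(b_n^{-1} X ∈ ·) converges in the Hult–Lindskog sense to λ_iid on ℝ^ℕ \ {0_∞}. -/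

import Mathlib

open MeasureTheory ProbabilityTheory Filter Topology Set
open scoped ENNReal NNReal

/-- The measure `ν_α(dx) = βα x^{-α-1} 1(x>0) dx + (1-β)α(-x)^{-α-1} 1(x<0) dx`. -/
noncomputable def nuAlpha (α β : ℝ) : Measure ℝ :=
  MeasureTheory.volume.withDensity fun x =>
    ENNReal.ofReal
      (if 0 < x then β * α * x ^ (-α - 1)
       else if x < 0 then (1 - β) * α * (-x) ^ (-α - 1) else 0)

/-- The limit measure `λ_iid = Σ_i δ₀ ⊗ ⋯ ⊗ ν_α (i-th coordinate) ⊗ δ₀ ⊗ ⋯`,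
concentrated on the axes of `ℝ^ℕ`. -/
noncomputable def lamIid (α β : ℝ) : Measure (ℕ → ℝ) :=
  Measure.sum fun i : ℕ =>
    Measure.map (fun x : ℝ => Function.update (0 : ℕ → ℝ) i x) (nuAlpha α β)

namespace Stmt10Aux

noncomputable def dens (α β : ℝ) (x : ℝ) : ℝ :=
  if 0 < x then β * α * x ^ (-α - 1)
  else if x < 0 then (1 - β) * α * (-x) ^ (-α - 1) else 0

lemma nuAlpha_eq (α β : ℝ) :
    nuAlpha α β = MeasureTheory.volume.withDensity fun x => ENNReal.ofReal (dens α β x) := rfl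

lemma dens_meas (α β : ℝ) : Measurable fun x => ENNReal.ofReal (dens α β x) := by
  have h : dens α β = fun x =>
      if 0 < x then β * α * Real.exp (Real.log x * (-α - 1))
      else if x < 0 then (1 - β) * α * Real.exp (Real.log (-x) * (-α - 1)) else 0 := by
    funext x
    unfold dens
    split_ifs with h1 h2
    · rw [Real.rpow_def_of_pos h1]
    · rw [Real.rpow_def_of_pos (by linarith : (0:ℝ) < -x)]
    · rfl
  rw [h]
  apply Measurable.ennreal_ofReal
  apply Measurable.ite (measurableSet_Ioi (a := (0:ℝ)))
  · exact (measurable_const.mul ((Real.measurable_log.mul measurable_const).exp))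
  · apply Measurable.ite (measurableSet_Iio (a := (0:ℝ)))
    · exact (measurable_const.mul (((Real.measurable_log.comp measurable_neg).mul
        measurable_const).exp))
    · exact measurable_const

lemma lint_tail (γ c e : ℝ) (he : e < -1) (hc : 0 < c) (hγ : 0 ≤ γ) :
    ∫⁻ x in Ici c, ENNReal.ofReal (γ * x ^ e) < ⊤ := by
  have hint : IntegrableOn (fun x => γ * x ^ e) (Ici c) volume :=
    (integrableOn_Ici_iff_integrableOn_Ioi (by finiteness)).2 ((integrableOn_Ioi_rpow_of_lt he hc).const_mul γ)
  have hnn : 0 ≤ᶠ[ae (volume.restrict (Ici c))] fun x => γ * x ^ e := by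
    filter_upwards [ae_restrict_mem measurableSet_Ici] with x hx
    exact mul_nonneg hγ (Real.rpow_nonneg (le_trans hc.le hx) e)
  rw [← ofReal_integral_eq_lintegral_ofReal hint hnn]
  exact ENNReal.ofReal_lt_top

lemma nu_tail_lt_top {α β : ℝ} (hα : 0 < α) (hβ₀ : 0 ≤ β) (hβ₁ : β ≤ 1) {c : ℝ} (hc : 0 < c) :
    nuAlpha α β {x | c ≤ |x|} < ⊤ := by
  have hset : MeasurableSet {x : ℝ | c ≤ |x|} :=
    (isClosed_le continuous_const continuous_abs).measurableSet
  rw [nuAlpha_eq, withDensity_apply _ hset]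
  have hsub : {x : ℝ | c ≤ |x|} ⊆ Iic (-c) ∪ Ici c := by
    intro x hx
    rcases le_or_gt 0 x with h | h
    · right; simpa [abs_of_nonneg h] using hx
    · left
      simp only [mem_setOf_eq, abs_of_neg h] at hx
      simp only [mem_Iic]; linarith
  have hbound : ∀ x : ℝ, 0 < x → dens α β x ≤ α * x ^ (-α - 1) := by
    intro x hx
    unfold dens
    rw [if_pos hx]
    nlinarith [mul_nonneg (mul_nonneg (by linarith : (0:ℝ) ≤ 1 - β) hα.le)
      (Real.rpow_nonneg hx.le (-α - 1))]
  have hboundneg : ∀ x : ℝ, 0 < x → dens α β (-x) ≤ α * x ^ (-α - 1) := by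
    intro x hx
    unfold dens
    rw [if_neg (by linarith), if_pos (by linarith), neg_neg]
    nlinarith [mul_nonneg (mul_nonneg hβ₀ hα.le) (Real.rpow_nonneg hx.le (-α - 1))]
  calc ∫⁻ x in {x | c ≤ |x|}, ENNReal.ofReal (dens α β x)
      ≤ ∫⁻ x in Iic (-c) ∪ Ici c, ENNReal.ofReal (dens α β x) := lintegral_mono_set hsub
    _ ≤ (∫⁻ x in Iic (-c), ENNReal.ofReal (dens α β x))
        + ∫⁻ x in Ici c, ENNReal.ofReal (dens α β x) := lintegral_union_le _ _ _
    _ < ⊤ := by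
        apply ENNReal.add_lt_top.2
        constructor
        · have hmap : volume.restrict (Iic (-c)) =
              Measure.map Neg.neg (volume.restrict (Ici c)) := by
            rw [show volume.restrict (Ici c) = volume.restrict (Neg.neg ⁻¹' (Iic (-c))) by
              congr 1; ext x; simp [le_neg]]
            rw [← measurableEmbedding_neg.restrict_map, Measure.map_neg_eq_self]
          rw [hmap, lintegral_map (dens_meas α β) measurable_neg]
          calc ∫⁻ x in Ici c, ENNReal.ofReal (dens α β (-x))
              ≤ ∫⁻ x in Ici c, ENNReal.ofReal (α * x ^ (-α - 1)) := by
                apply setLIntegral_mono' measurableSet_Ici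
                intro x hx
                exact ENNReal.ofReal_le_ofReal (hboundneg x (lt_of_lt_of_le hc hx))
            _ < ⊤ := lint_tail α c _ (by linarith) hc hα.le
        · calc ∫⁻ x in Ici c, ENNReal.ofReal (dens α β x)
              ≤ ∫⁻ x in Ici c, ENNReal.ofReal (α * x ^ (-α - 1)) := by
                apply setLIntegral_mono' measurableSet_Ici
                intro x hx
                exact ENNReal.ofReal_le_ofReal (hbound x (lt_of_lt_of_le hc hx))
            _ < ⊤ := lint_tail α c _ (by linarith) hc hα.le


lemma exists_bump (c d : ℝ) (h0 : 0 < c) (hcd : c < d) :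
    ∃ f : ℝ → ℝ, Continuous f ∧ (∀ x, 0 ≤ f x) ∧ (∀ x, f x ≤ 1) ∧
      (∀ x, |x| < c → f x = 0) ∧ (∀ x, d ≤ |x| → f x = 1) := by
  refine ⟨fun x => min 1 (max 0 ((|x| - c) / (d - c))), ?_, ?_, ?_, ?_, ?_⟩
  · exact continuous_const.min (continuous_const.max
      ((continuous_abs.sub continuous_const).div_const _))
  · intro x; exact le_min zero_le_one (le_max_left 0 _)
  · intro x; exact min_le_left _ _
  · intro x hx
    have h1 : (|x| - c) / (d - c) ≤ 0 :=
      div_nonpos_of_nonpos_of_nonneg (by linarith) (by linarith)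
    simp [max_eq_left h1]
  · intro x hx
    have h1 : (1:ℝ) ≤ (|x| - c) / (d - c) :=
      (one_le_div (by linarith)).2 (by linarith)
    simp [min_eq_left (le_max_of_le_right h1)]

lemma finset_nhds_ball (t : ℕ → Set ℝ) :
    ∀ (s : Finset ℕ), (∀ j ∈ s, t j ∈ 𝓝 (0:ℝ)) →
      ∃ η > (0:ℝ), ∀ j ∈ s, ∀ x : ℝ, |x| < η → x ∈ t j := by
  classical
  intro s
  induction s using Finset.induction_on with
  | empty => exact fun _ => ⟨1, one_pos, by simp⟩
  | insert a s' ha ih =>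
    intro h
    obtain ⟨δ, hδ, hball⟩ := ih (fun j hj => h j (Finset.mem_insert_of_mem hj))
    obtain ⟨ε, hε, hεball⟩ := Metric.mem_nhds_iff.1 (h a (Finset.mem_insert_self a s'))
    refine ⟨min δ ε, lt_min hδ hε, ?_⟩
    intro j hj x hx
    rcases Finset.mem_insert.1 hj with rfl | hj
    · apply hεball
      simp only [Metric.mem_ball, Real.dist_eq, sub_zero]
      exact lt_of_lt_of_le hx (min_le_right δ ε)
    · exact hball j hj x (lt_of_lt_of_le hx (min_le_left δ ε))

lemma tube (F : (ℕ → ℝ) → ℝ) (hF : Continuous F) (i : ℕ) {K : Set ℝ} (hK : IsCompact K)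
    {θ : ℝ} (hθ : 0 < θ) :
    ∃ (t : Finset ℕ) (η : ℝ), 0 < η ∧ ∀ y : ℕ → ℝ, y i ∈ K →
      (∀ j ∈ t, j ≠ i → |y j| < η) → |F y - F (Function.update 0 i (y i))| < θ := by
  classical
  have haxis : Continuous (fun x : ℝ => Function.update (0:ℕ→ℝ) i x) := by
    apply continuous_pi
    intro j
    simp only [Function.update_apply]
    by_cases hj : j = i
    · simpa [hj] using continuous_id'
    · simp only [hj, if_false]; exact continuous_const
  set Φ : ℝ × (ℕ → ℝ) → ℝ :=
    fun p => F (Function.update p.2 i p.1) - F (Function.update 0 i p.1) with hΦ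
  have hcont : Continuous Φ := by
    have hupd : Continuous (fun p : ℝ × (ℕ → ℝ) => Function.update p.2 i p.1) := by
      apply continuous_pi
      intro j
      simp only [Function.update_apply]
      by_cases hj : j = i
      · simpa [hj] using continuous_fst
      · simp only [hj, if_false]; exact (continuous_apply j).comp continuous_snd
    exact (hF.comp hupd).sub (hF.comp (haxis.comp continuous_fst))
  have hopen : IsOpen {p : ℝ × (ℕ → ℝ) | |Φ p| < θ} :=
    isOpen_lt (continuous_abs.comp hcont) continuous_const
  have hsub : K ×ˢ ({0} : Set (ℕ → ℝ)) ⊆ {p | |Φ p| < θ} := by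
    rintro ⟨x, z⟩ ⟨_, hz⟩
    simp only [mem_singleton_iff] at hz
    subst hz
    simpa [Φ] using hθ
  obtain ⟨u, v, _, hv, hKu, h0v, huv⟩ :=
    generalized_tube_lemma hK isCompact_singleton hopen hsub
  have hv0 : v ∈ 𝓝 (0 : ℕ → ℝ) := hv.mem_nhds (h0v (mem_singleton 0))
  rw [nhds_pi, Filter.mem_pi] at hv0
  obtain ⟨I, hIfin, t, ht, htv⟩ := hv0
  obtain ⟨η, hη, hball⟩ := finset_nhds_ball t hIfin.toFinset
    (fun j _ => by simpa using ht j)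
  refine ⟨hIfin.toFinset, η, hη, ?_⟩
  intro y hyK hysmall
  have hz : Function.update y i 0 ∈ v := by
    apply htv
    rw [Set.mem_pi]
    intro j hj
    by_cases hji : j = i
    · subst hji
      simpa [Function.update_self] using mem_of_mem_nhds (by simpa using ht j)
    · rw [Function.update_of_ne hji]
      exact hball j (hIfin.mem_toFinset.2 hj) (y j)
        (hysmall j (hIfin.mem_toFinset.2 hj) hji)
  have hmem := huv (Set.mk_mem_prod (hKu hyK) hz)
  simp only [mem_setOf_eq, hΦ] at hmem
  rwa [Function.update_idem, Function.update_eq_self] at hmem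


lemma nu_tail_tendsto {α β : ℝ} (hα : 0 < α) (hβ₀ : 0 ≤ β) (hβ₁ : β ≤ 1) :
    Tendsto (fun m : ℕ => nuAlpha α β {x | (m:ℝ) + 1 ≤ |x|}) atTop (𝓝 0) := by
  have hset : ∀ m : ℕ, MeasurableSet {x : ℝ | (m:ℝ) + 1 ≤ |x|} := fun m =>
    (isClosed_le continuous_const continuous_abs).measurableSet
  have hanti : Antitone fun m : ℕ => {x : ℝ | (m:ℝ) + 1 ≤ |x|} := by
    intro m n hmn x hx
    simp only [mem_setOf_eq] at hx ⊢
    have : (m:ℝ) ≤ (n:ℝ) := Nat.cast_le.2 hmn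
    linarith
  have hempty : ⋂ m : ℕ, {x : ℝ | (m:ℝ) + 1 ≤ |x|} = ∅ := by
    ext x
    simp only [mem_iInter, mem_setOf_eq, mem_empty_iff_false, iff_false]
    intro h
    obtain ⟨m, hm⟩ := exists_nat_gt |x|
    linarith [h m]
  have := tendsto_measure_iInter_atTop (μ := nuAlpha α β)
    (fun m => (hset m).nullMeasurableSet) hanti
    ⟨0, by simpa using (nu_tail_lt_top hα hβ₀ hβ₁ (by norm_num : (0:ℝ) < (0:ℕ) + 1)).ne⟩
  rw [hempty] at this
  simpa [Function.comp_def] using this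

lemma axis_cont (i : ℕ) : Continuous (fun x : ℝ => Function.update (0:ℕ→ℝ) i x) := by
  apply continuous_pi
  intro j
  simp only [Function.update_apply]
  by_cases hj : j = i
  · simpa [hj] using continuous_id'
  · simp only [hj, if_false]; exact continuous_const

lemma lamIid_integral {α β : ℝ} (hα : 0 < α) (hβ₀ : 0 ≤ β) (hβ₁ : β ≤ 1)
    (F : (ℕ → ℝ) → ℝ) (hF : Continuous F) (C : ℝ) (hC : ∀ y, |F y| ≤ C)
    (s : Finset ℕ) (δ0 : ℝ) (hδ0 : 0 < δ0)
    (hsupp : ∀ y : ℕ → ℝ, (∀ j ∈ s, |y j| < δ0) → F y = 0) :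
    ∫ y, F y ∂(lamIid α β) = ∑ i ∈ s, ∫ x, F (Function.update 0 i x) ∂(nuAlpha α β) := by
  classical
  set ν := nuAlpha α β with hν
  have hGzero : ∀ (i : ℕ) (x : ℝ), i ∉ s → F (Function.update 0 i x) = 0 := by
    intro i x hi
    apply hsupp
    intro j hj
    rw [Function.update_apply]
    rw [if_neg (by rintro rfl; exact hi hj)]
    simpa using hδ0
  have hGsmall : ∀ (i : ℕ) (x : ℝ), |x| < δ0 → F (Function.update 0 i x) = 0 := by
    intro i x hx
    apply hsupp
    intro j hj
    rw [Function.update_apply]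
    split_ifs with h
    · subst h; exact hx
    · simpa using hδ0
  have htail : MeasurableSet {x : ℝ | δ0 ≤ |x|} :=
    (isClosed_le continuous_const continuous_abs).measurableSet
  have hInt : Integrable F (lamIid α β) := by
    refine ⟨hF.aestronglyMeasurable, ?_⟩
    rw [HasFiniteIntegral, lamIid, lintegral_sum_measure]
    change ∑' i, ∫⁻ y, (‖F y‖₊ : ℝ≥0∞) ∂(Measure.map (fun x : ℝ => Function.update (0:ℕ→ℝ) i x) ν) < ⊤
    have hterm : ∀ i : ℕ,
        (∫⁻ y, ‖F y‖₊ ∂(Measure.map (fun x : ℝ => Function.update (0:ℕ→ℝ) i x) ν))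
          = ∫⁻ x, ‖F (Function.update (0:ℕ→ℝ) i x)‖₊ ∂ν := fun i =>
      lintegral_map hF.measurable.nnnorm.coe_nnreal_ennreal (axis_cont i).measurable
    have h0 : ∀ i ∉ s,
        (∫⁻ y, ‖F y‖₊ ∂(Measure.map (fun x : ℝ => Function.update (0:ℕ→ℝ) i x) ν)) = 0 := by
      intro i hi
      rw [hterm i]
      have hz : ∀ x : ℝ, (‖F (Function.update (0:ℕ→ℝ) i x)‖₊ : ℝ≥0∞) = 0 := by
        intro x; rw [hGzero i x hi]; simp
      simp only [hz, lintegral_zero]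
    rw [tsum_eq_sum (s := s) h0]
    · apply ENNReal.sum_lt_top.2
      intro i _
      rw [hterm i]
      have hle : (fun x : ℝ => (‖F (Function.update (0:ℕ→ℝ) i x)‖₊ : ℝ≥0∞))
          ≤ Set.indicator {x : ℝ | δ0 ≤ |x|} (fun _ => ENNReal.ofReal C) := by
        intro x
        show (‖F (Function.update (0:ℕ→ℝ) i x)‖₊ : ℝ≥0∞)
          ≤ Set.indicator {x : ℝ | δ0 ≤ |x|} (fun _ => ENNReal.ofReal C) x
        by_cases hx : δ0 ≤ |x|
        · rw [Set.indicator_of_mem (show x ∈ {x : ℝ | δ0 ≤ |x|} from hx)]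
          rw [show ((‖F (Function.update (0:ℕ→ℝ) i x)‖₊ : ℝ≥0∞))
            = ENNReal.ofReal |F (Function.update (0:ℕ→ℝ) i x)| from
            Real.enorm_eq_ofReal_abs _]
          exact ENNReal.ofReal_le_ofReal (hC _)
        · rw [Set.indicator_of_notMem (show x ∉ {x : ℝ | δ0 ≤ |x|} from hx)]
          rw [hGsmall i x (not_le.1 hx)]
          simp
      calc ∫⁻ x, (‖F (Function.update (0:ℕ→ℝ) i x)‖₊ : ℝ≥0∞) ∂ν
          ≤ ∫⁻ x, Set.indicator {x : ℝ | δ0 ≤ |x|} (fun _ => ENNReal.ofReal C) x ∂ν :=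
            lintegral_mono hle
        _ = ENNReal.ofReal C * ν {x : ℝ | δ0 ≤ |x|} := by
            rw [lintegral_indicator htail, setLIntegral_const]
        _ < ⊤ := ENNReal.mul_lt_top ENNReal.ofReal_lt_top (nu_tail_lt_top hα hβ₀ hβ₁ hδ0)
  rw [lamIid] at hInt ⊢
  rw [integral_sum_measure hInt]
  have hmap : ∀ i : ℕ,
      ∫ y, F y ∂(Measure.map (fun x : ℝ => Function.update (0:ℕ→ℝ) i x) ν)
        = ∫ x, F (Function.update (0:ℕ→ℝ) i x) ∂ν := fun i =>
    integral_map (axis_cont i).measurable.aemeasurable hF.aestronglyMeasurable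
  have h0' : ∀ i ∉ s,
      (∫ y, F y ∂(Measure.map (fun x : ℝ => Function.update (0:ℕ→ℝ) i x) ν)) = 0 := by
    intro i hi
    rw [hmap i]
    simp only [hGzero i _ hi]
    exact integral_zero _ _
  rw [tsum_eq_sum (s := s) h0']
  exact Finset.sum_congr rfl fun i _ => hmap i

lemma int_bdd {Ω : Type*} [MeasurableSpace Ω] (P : Measure Ω) [IsFiniteMeasure P]
    {g : Ω → ℝ} (hg : AEStronglyMeasurable g P) {C : ℝ} (h : ∀ ω, |g ω| ≤ C) :
    Integrable g P :=
  ⟨hg, HasFiniteIntegral.of_bounded (ae_of_all _ (by simpa [Real.norm_eq_abs] using h))⟩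

lemma int_chi {Ω : Type*} [MeasurableSpace Ω] (P : Measure Ω) {A : Set Ω}
    (hA : MeasurableSet A) :
    ∫ ω, A.indicator (fun _ => (1:ℝ)) ω ∂P = (P A).toReal :=
  integral_indicator_one hA

lemma chi_integrable {Ω : Type*} [MeasurableSpace Ω] (P : Measure Ω) [IsFiniteMeasure P]
    {A : Set Ω} (hA : MeasurableSet A) :
    Integrable (fun ω => A.indicator (fun _ => (1:ℝ)) ω) P := by
  apply int_bdd P ((measurable_const.indicator hA).aestronglyMeasurable) (C := 1)
  intro ω
  by_cases h : ω ∈ A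
  · rw [Set.indicator_of_mem h]; norm_num
  · rw [Set.indicator_of_notMem h]; norm_num

lemma chi_nonneg {Ω : Type*} {A : Set Ω} (ω : Ω) : (0:ℝ) ≤ A.indicator (fun _ => (1:ℝ)) ω :=
  Set.indicator_apply_nonneg (fun _ => zero_le_one)

lemma chi_le_one {Ω : Type*} {A : Set Ω} (ω : Ω) : A.indicator (fun _ => (1:ℝ)) ω ≤ 1 := by
  by_cases h : ω ∈ A
  · rw [Set.indicator_of_mem h]
  · rw [Set.indicator_of_notMem h]; norm_num

set_option maxHeartbeats 1000000 in
lemma step2 {Ω : Type*} [MeasurableSpace Ω] (P : Measure Ω) [IsProbabilityMeasure P]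
    (ρ : ℝ) (hρ : 1 < ρ)
    (F : (ℕ → ℝ) → ℝ) (hFc : Continuous F) (C : ℝ) (hC : ∀ y, |F y| ≤ C)
    (Z : ℕ → Ω → (ℕ → ℝ)) (hZ : ∀ n, Measurable (Z n))
    (i : ℕ) (δ0 : ℝ) (hδ0 : 0 < δ0) (A : ℝ) (hA : 0 < A)
    (htailA : ∀ᶠ n in atTop, ρ ^ n * (P {ω | δ0 ≤ |Z n ω i|}).toReal ≤ A)
    (hMsmall : ∀ θ : ℝ, 0 < θ → ∃ M : ℝ, δ0 ≤ M ∧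
      ∀ᶠ n in atTop, ρ ^ n * (P {ω | M ≤ |Z n ω i|}).toReal ≤ θ)
    (hpair : ∀ η θ : ℝ, 0 < η → 0 < θ → ∀ᶠ n in atTop, ∀ j, j ≠ i →
      ρ ^ n * (P ({ω | δ0 ≤ |Z n ω i|} ∩ {ω | η ≤ |Z n ω j|})).toReal ≤ θ) :
    Tendsto (fun n => ρ ^ n * ∫ ω,
      ({ω : Ω | δ0 ≤ |Z n ω i|}.indicator (fun _ => (1:ℝ)) ω)
        * (F (Z n ω) - F (Function.update 0 i (Z n ω i))) ∂P)
      atTop (𝓝 0) := by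
  have hC0 : 0 ≤ C := le_trans (abs_nonneg _) (hC 0)
  rw [NormedAddCommGroup.tendsto_nhds_zero]
  intro ε hε
  set θ := ε / (2 * (A + 4 * C + 2)) with hθdef
  have hθ : 0 < θ := by positivity
  obtain ⟨M, hMδ, hMev⟩ := hMsmall θ hθ
  have hKclosed : IsClosed {x : ℝ | δ0 ≤ |x| ∧ |x| ≤ M} := by
    have h1 : {x : ℝ | δ0 ≤ |x| ∧ |x| ≤ M} =
        {x : ℝ | δ0 ≤ |x|} ∩ {x : ℝ | |x| ≤ M} := rfl
    rw [h1]
    exact (isClosed_le continuous_const continuous_abs).inter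
      (isClosed_le continuous_abs continuous_const)
  have hK : IsCompact {x : ℝ | δ0 ≤ |x| ∧ |x| ≤ M} := by
    apply IsCompact.of_isClosed_subset (isCompact_Icc (a := -M) (b := M)) hKclosed
    intro x hx
    exact abs_le.1 hx.2
  obtain ⟨tF, η, hη, htube⟩ := tube F hFc i hK hθ
  have hθ3 : 0 < θ / (tF.card + 1) := by positivity
  have hpair' := hpair η (θ / (tF.card + 1)) hη hθ3
  filter_upwards [htailA, hMev, hpair'] with n hn1 hn2 hn3
  -- measurability
  have hZim : Measurable fun ω => Z n ω i := (measurable_pi_apply i).comp (hZ n)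
  have hZjm : ∀ j, Measurable fun ω => Z n ω j := fun j => (measurable_pi_apply j).comp (hZ n)
  have hBm : MeasurableSet {ω : Ω | δ0 ≤ |Z n ω i|} :=
    measurableSet_le measurable_const hZim.abs
  have hMm : MeasurableSet {ω : Ω | M ≤ |Z n ω i|} :=
    measurableSet_le measurable_const hZim.abs
  have hpm : ∀ j, MeasurableSet ({ω : Ω | δ0 ≤ |Z n ω i|} ∩ {ω : Ω | η ≤ |Z n ω j|}) := fun j =>
    hBm.inter (measurableSet_le measurable_const (hZjm j).abs)
  have hρn : (0:ℝ) < ρ ^ n := pow_pos (by linarith) n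
  set φ : Ω → ℝ := fun ω =>
    ({ω : Ω | δ0 ≤ |Z n ω i|}.indicator (fun _ => (1:ℝ)) ω)
      * (F (Z n ω) - F (Function.update 0 i (Z n ω i))) with hφdef
  set g : Ω → ℝ := fun ω =>
    θ * ({ω : Ω | δ0 ≤ |Z n ω i|}.indicator (fun _ => (1:ℝ)) ω)
    + 2 * C * ({ω : Ω | M ≤ |Z n ω i|}.indicator (fun _ => (1:ℝ)) ω)
    + 2 * C * ∑ j ∈ tF.erase i,
        (({ω : Ω | δ0 ≤ |Z n ω i|} ∩ {ω : Ω | η ≤ |Z n ω j|}).indicator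
          (fun _ => (1:ℝ)) ω) with hgdef
  have hφmeas : Measurable φ := by
    apply Measurable.mul (measurable_const.indicator hBm)
    exact (hFc.measurable.comp (hZ n)).sub
      ((hFc.comp (axis_cont i)).measurable.comp hZim)
  have hdiff_bd : ∀ ω, |F (Z n ω) - F (Function.update 0 i (Z n ω i))| ≤ 2 * C := by
    intro ω
    calc |F (Z n ω) - F (Function.update 0 i (Z n ω i))|
        ≤ |F (Z n ω)| + |F (Function.update 0 i (Z n ω i))| := abs_sub _ _
      _ ≤ 2 * C := by linarith [hC (Z n ω), hC (Function.update 0 i (Z n ω i))]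
  have hφbd : ∀ ω, |φ ω| ≤ 2 * C := by
    intro ω
    simp only [hφdef]
    rw [abs_mul]
    by_cases h : ω ∈ {ω : Ω | δ0 ≤ |Z n ω i|}
    · rw [Set.indicator_of_mem h]
      simpa using hdiff_bd ω
    · rw [Set.indicator_of_notMem h]
      simp [hC0]
  have hφint : Integrable φ P := int_bdd P hφmeas.aestronglyMeasurable hφbd
  have hgint : Integrable g P := by
    apply Integrable.add
    apply Integrable.add
    · exact (chi_integrable P hBm).const_mul θ
    · exact (chi_integrable P hMm).const_mul (2 * C)
    · exact Integrable.const_mul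
        (integrable_finset_sum _ fun j _ => chi_integrable P (hpm j)) (2 * C)
  -- pointwise bound
  have hpt : ∀ ω, |φ ω| ≤ g ω := by
    intro ω
    have h3nn : (0:ℝ) ≤ 2 * C * ∑ j ∈ tF.erase i,
        (({ω : Ω | δ0 ≤ |Z n ω i|} ∩ {ω : Ω | η ≤ |Z n ω j|}).indicator
          (fun _ => (1:ℝ)) ω) :=
      mul_nonneg (by linarith) (Finset.sum_nonneg fun j _ => chi_nonneg ω)
    simp only [hφdef, hgdef]
    by_cases hB : ω ∈ {ω : Ω | δ0 ≤ |Z n ω i|}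
    · rw [Set.indicator_of_mem hB, one_mul]
      by_cases hM : ω ∈ {ω : Ω | M ≤ |Z n ω i|}
      · rw [Set.indicator_of_mem hM]
        have h1 := hdiff_bd ω
        have h2 : (0:ℝ) ≤ θ * 1 := by linarith [hθ.le]
        linarith
      · rw [Set.indicator_of_notMem hM]
        have hBs : δ0 ≤ |Z n ω i| := hB
        have hMs : |Z n ω i| ≤ M := (not_le.1 hM).le
        by_cases hsmall : ∀ j ∈ tF, j ≠ i → |Z n ω j| < η
        · have := htube (Z n ω) ⟨hBs, hMs⟩ hsmall
          have h2 : (0:ℝ) ≤ 2 * C * 0 := by norm_num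
          have hind : (0:ℝ) ≤ ({ω : Ω | δ0 ≤ |Z n ω i|}.indicator (fun _ => (1:ℝ)) ω) :=
            chi_nonneg ω
          nlinarith [chi_nonneg (A := {ω : Ω | δ0 ≤ |Z n ω i|}) ω]
        · push_neg at hsmall
          obtain ⟨j, hjt, hji, hjb⟩ := hsmall
          have hjmem : j ∈ tF.erase i := Finset.mem_erase.2 ⟨hji, hjt⟩
          have hmem : ω ∈ ({ω : Ω | δ0 ≤ |Z n ω i|} ∩ {ω : Ω | η ≤ |Z n ω j|}) :=
            ⟨hB, hjb⟩
          have hone : (({ω : Ω | δ0 ≤ |Z n ω i|} ∩ {ω : Ω | η ≤ |Z n ω j|}).indicator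
              (fun _ => (1:ℝ)) ω) = 1 := Set.indicator_of_mem hmem _
          have hsum : (1:ℝ) ≤ ∑ k ∈ tF.erase i,
              (({ω : Ω | δ0 ≤ |Z n ω i|} ∩ {ω : Ω | η ≤ |Z n ω k|}).indicator
                (fun _ => (1:ℝ)) ω) := by
            have hss := Finset.single_le_sum (f := fun k =>
              (({ω : Ω | δ0 ≤ |Z n ω i|} ∩ {ω : Ω | η ≤ |Z n ω k|}).indicator
                (fun _ => (1:ℝ)) ω)) (fun k _ => chi_nonneg ω) hjmem
            simpa only [hone] using hss
          have h1 := hdiff_bd ω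
          nlinarith [hθ.le, chi_nonneg (A := {ω : Ω | M ≤ |Z n ω i|}) ω]
    · rw [Set.indicator_of_notMem hB, zero_mul, abs_zero]
      have h1 : (0:ℝ) ≤ θ * ({ω : Ω | δ0 ≤ |Z n ω i|}.indicator (fun _ => (1:ℝ)) ω) :=
        mul_nonneg hθ.le (chi_nonneg ω)
      have h2 : (0:ℝ) ≤ 2 * C * ({ω : Ω | M ≤ |Z n ω i|}.indicator (fun _ => (1:ℝ)) ω) :=
        mul_nonneg (by linarith) (chi_nonneg ω)
      linarith
  have hint : |∫ ω, φ ω ∂P| ≤ ∫ ω, g ω ∂P := by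
    have h1 := norm_integral_le_integral_norm (μ := P) φ
    simp only [Real.norm_eq_abs] at h1
    exact le_trans h1 (integral_mono hφint.abs hgint hpt)
  have hgval : ∫ ω, g ω ∂P
      = θ * (P {ω : Ω | δ0 ≤ |Z n ω i|}).toReal
      + 2 * C * (P {ω : Ω | M ≤ |Z n ω i|}).toReal
      + 2 * C * ∑ j ∈ tF.erase i,
          (P ({ω : Ω | δ0 ≤ |Z n ω i|} ∩ {ω : Ω | η ≤ |Z n ω j|})).toReal := by
    simp only [hgdef]
    have hI1 : Integrable (fun ω =>
        θ * ({ω : Ω | δ0 ≤ |Z n ω i|}.indicator (fun _ => (1:ℝ)) ω)) P :=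
      (chi_integrable P hBm).const_mul θ
    have hI2 : Integrable (fun ω =>
        2 * C * ({ω : Ω | M ≤ |Z n ω i|}.indicator (fun _ => (1:ℝ)) ω)) P :=
      (chi_integrable P hMm).const_mul (2 * C)
    have hI12 : Integrable (fun ω =>
        θ * ({ω : Ω | δ0 ≤ |Z n ω i|}.indicator (fun _ => (1:ℝ)) ω)
        + 2 * C * ({ω : Ω | M ≤ |Z n ω i|}.indicator (fun _ => (1:ℝ)) ω)) P :=
      hI1.add hI2
    have hI3 : Integrable (fun ω => 2 * C * ∑ j ∈ tF.erase i,
        (({ω : Ω | δ0 ≤ |Z n ω i|} ∩ {ω : Ω | η ≤ |Z n ω j|}).indicator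
          (fun _ => (1:ℝ)) ω)) P :=
      Integrable.const_mul (integrable_finset_sum _ fun j _ =>
        chi_integrable P (hpm j)) (2 * C)
    rw [integral_add hI12 hI3, integral_add hI1 hI2]
    rw [integral_const_mul, integral_const_mul, integral_const_mul]
    rw [int_chi P hBm, int_chi P hMm]
    rw [integral_finset_sum _ (fun j _ => chi_integrable P (hpm j))]
    congr 2
    exact Finset.sum_congr rfl fun j _ => int_chi P (hpm j)
  have hterm1 : ρ ^ n * (θ * (P {ω : Ω | δ0 ≤ |Z n ω i|}).toReal) ≤ θ * A := by
    nlinarith [hn1, hθ.le, ENNReal.toReal_nonneg (a := P {ω : Ω | δ0 ≤ |Z n ω i|})]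
  have hterm2 : ρ ^ n * (2 * C * (P {ω : Ω | M ≤ |Z n ω i|}).toReal) ≤ 2 * C * θ := by
    nlinarith [hn2, ENNReal.toReal_nonneg (a := P {ω : Ω | M ≤ |Z n ω i|})]
  have hterm3 : ρ ^ n * (2 * C * ∑ j ∈ tF.erase i,
      (P ({ω : Ω | δ0 ≤ |Z n ω i|} ∩ {ω : Ω | η ≤ |Z n ω j|})).toReal) ≤ 2 * C * θ := by
    have hsum : ρ ^ n * ∑ j ∈ tF.erase i,
        (P ({ω : Ω | δ0 ≤ |Z n ω i|} ∩ {ω : Ω | η ≤ |Z n ω j|})).toReal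
        ≤ (tF.erase i).card * (θ / (tF.card + 1)) := by
      rw [Finset.mul_sum]
      calc ∑ j ∈ tF.erase i, ρ ^ n *
          (P ({ω : Ω | δ0 ≤ |Z n ω i|} ∩ {ω : Ω | η ≤ |Z n ω j|})).toReal
          ≤ ∑ _j ∈ tF.erase i, (θ / (tF.card + 1)) :=
            Finset.sum_le_sum fun j hj => hn3 j (Finset.ne_of_mem_erase hj)
        _ = (tF.erase i).card * (θ / (tF.card + 1)) := by
            rw [Finset.sum_const, nsmul_eq_mul]
    have hcard : ((tF.erase i).card : ℝ) * (θ / (tF.card + 1)) ≤ θ := by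
      have h1 : ((tF.erase i).card : ℝ) ≤ (tF.card : ℝ) :=
        Nat.cast_le.2 Finset.card_erase_le
      have h3 : (0:ℝ) < (tF.card : ℝ) + 1 := by positivity
      rw [div_eq_mul_inv, show ((tF.erase i).card : ℝ) * (θ * ((tF.card:ℝ) + 1)⁻¹)
        = ((tF.erase i).card * ((tF.card:ℝ) + 1)⁻¹) * θ from by ring]
      have h4 : ((tF.erase i).card : ℝ) * ((tF.card:ℝ) + 1)⁻¹ ≤ 1 := by
        rw [mul_inv_le_iff₀ h3]
        linarith
      nlinarith [hθ.le, mul_nonneg (Nat.cast_nonneg (tF.erase i).card)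
        (inv_nonneg.2 h3.le)]
    have hsumnn : (0:ℝ) ≤ ∑ j ∈ tF.erase i,
        (P ({ω : Ω | δ0 ≤ |Z n ω i|} ∩ {ω : Ω | η ≤ |Z n ω j|})).toReal :=
      Finset.sum_nonneg fun j _ => ENNReal.toReal_nonneg
    nlinarith
  have hest : ‖ρ ^ n * ∫ ω, φ ω ∂P‖ ≤ θ * (A + 4 * C) := by
    rw [Real.norm_eq_abs, abs_mul, abs_of_pos hρn]
    calc ρ ^ n * |∫ ω, φ ω ∂P| ≤ ρ ^ n * ∫ ω, g ω ∂P :=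
          mul_le_mul_of_nonneg_left hint hρn.le
      _ = ρ ^ n * (θ * (P {ω : Ω | δ0 ≤ |Z n ω i|}).toReal)
          + ρ ^ n * (2 * C * (P {ω : Ω | M ≤ |Z n ω i|}).toReal)
          + ρ ^ n * (2 * C * ∑ j ∈ tF.erase i,
              (P ({ω : Ω | δ0 ≤ |Z n ω i|} ∩ {ω : Ω | η ≤ |Z n ω j|})).toReal) := by
          rw [hgval]; ring
      _ ≤ θ * A + 2 * C * θ + 2 * C * θ := by linarith [hterm1, hterm2, hterm3]
      _ = θ * (A + 4 * C) := by ring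
  calc ‖ρ ^ n * ∫ ω, φ ω ∂P‖ ≤ θ * (A + 4 * C) := hest
    _ < ε := by
      rw [hθdef, div_mul_eq_mul_div, div_lt_iff₀ (by positivity)]
      nlinarith


end Stmt10Aux

set_option maxHeartbeats 2000000 in
theorem stmt10 {Ω : Type*} [MeasurableSpace Ω] (P : Measure Ω) [IsProbabilityMeasure P]
    (X : ℕ → Ω → ℝ) (hXmeas : ∀ i, Measurable (X i))
    (hIndep : iIndepFun X P)
    (hIdent : ∀ i, IdentDistrib (X i) (X 0) P P)
    (ρ α β : ℝ) (hρ : 1 < ρ) (hα : 0 < α) (hβ₀ : 0 ≤ β) (hβ₁ : β ≤ 1)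
    (b : ℕ → ℝ) (hb_pos : ∀ n, 0 < b n) (hb_mono : Monotone b)
    (hmarg : ∀ f : ℝ → ℝ, Continuous f → (∃ C, ∀ x, |f x| ≤ C) →
      (∃ δ > (0:ℝ), ∀ x, |x| < δ → f x = 0) →
      Tendsto (fun n : ℕ => ρ ^ n * ∫ ω, f ((b n)⁻¹ * X 0 ω) ∂P)
        atTop (𝓝 (∫ x, f x ∂(nuAlpha α β)))) :
    ∀ F : (ℕ → ℝ) → ℝ, Continuous F → (∃ C, ∀ y, |F y| ≤ C) →
      (∃ U ∈ 𝓝 (0 : ℕ → ℝ), ∀ y ∈ U, F y = 0) →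
      Tendsto (fun n : ℕ => ρ ^ n * ∫ ω, F (fun i => (b n)⁻¹ * X i ω) ∂P)
        atTop (𝓝 (∫ y, F y ∂(lamIid α β))) := by
  classical
  intro F hFc hFbd hFz
  obtain ⟨C, hC⟩ := hFbd
  have hC0 : 0 ≤ C := le_trans (abs_nonneg _) (hC 0)
  obtain ⟨U, hU, hUz⟩ := hFz
  rw [nhds_pi, Filter.mem_pi] at hU
  obtain ⟨I, hIfin, tU, htU, htUsub⟩ := hU
  obtain ⟨δ0, hδ0, hδball⟩ := Stmt10Aux.finset_nhds_ball tU hIfin.toFinset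
    (fun j _ => by simpa using htU j)
  set s : Finset ℕ := hIfin.toFinset with hsdef
  have hsupp : ∀ y : ℕ → ℝ, (∀ j ∈ s, |y j| < δ0) → F y = 0 := by
    intro y hy
    apply hUz
    apply htUsub
    rw [Set.mem_pi]
    intro j hj
    exact hδball j (hIfin.mem_toFinset.2 hj) (y j) (hy j (hIfin.mem_toFinset.2 hj))
  have hGsmall : ∀ (i : ℕ) (x : ℝ), |x| < δ0 → F (Function.update 0 i x) = 0 := by
    intro i x hx
    apply hsupp
    intro j hj
    rw [Function.update_apply]
    split_ifs with h
    · exact hx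
    · simpa using hδ0
  have hXim : ∀ (n i : ℕ), Measurable fun ω => (b n)⁻¹ * X i ω :=
    fun n i => (hXmeas i).const_mul _
  have hZmeas : ∀ n : ℕ, Measurable fun ω => (fun i => (b n)⁻¹ * X i ω) :=
    fun n => measurable_pi_lambda _ fun i => hXim n i
  have hsetm : ∀ (r : ℝ) (n i : ℕ), MeasurableSet {ω | r ≤ |(b n)⁻¹ * X i ω|} :=
    fun r n i => measurableSet_le measurable_const (hXim n i).abs
  have hρ0 : (0:ℝ) < ρ := by linarith
  have hρn : ∀ n : ℕ, (0:ℝ) < ρ ^ n := fun n => pow_pos hρ0 n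
  -- key tail bound
  have keytail : ∀ c d θ2 : ℝ, 0 < c → c < d → 0 < θ2 →
      ∀ᶠ n in atTop, ∀ j : ℕ, ρ ^ n * (P {ω | d ≤ |(b n)⁻¹ * X j ω|}).toReal
        ≤ (nuAlpha α β {x | c ≤ |x|}).toReal + θ2 := by
    intro c d θ2 hc hcd hθ2
    obtain ⟨f, hfc, hf0, hf1, hfz, hfone⟩ := Stmt10Aux.exists_bump c d hc hcd
    have hfm := hmarg f hfc ⟨1, fun x => abs_le.2 ⟨by linarith [hf0 x], hf1 x⟩⟩ ⟨c, hc, hfz⟩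
    have hνfin := Stmt10Aux.nu_tail_lt_top hα hβ₀ hβ₁ hc
    have htm : MeasurableSet {x : ℝ | c ≤ |x|} :=
      (isClosed_le continuous_const continuous_abs).measurableSet
    have hind : Integrable ({x : ℝ | c ≤ |x|}.indicator (fun _ => (1:ℝ))) (nuAlpha α β) := by
      rw [integrable_indicator_iff htm]
      exact integrableOn_const hνfin.ne
    have hfint : Integrable f (nuAlpha α β) := by
      apply hind.mono' hfc.aestronglyMeasurable
      apply ae_of_all
      intro x
      rw [Real.norm_eq_abs, abs_of_nonneg (hf0 x)]
      by_cases hx : x ∈ {x : ℝ | c ≤ |x|}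
      · rw [Set.indicator_of_mem hx]; exact hf1 x
      · rw [Set.indicator_of_notMem hx]
        exact le_of_eq (hfz x (not_le.1 hx))
    have hfle : ∫ x, f x ∂nuAlpha α β ≤ (nuAlpha α β {x | c ≤ |x|}).toReal := by
      rw [← Stmt10Aux.int_chi (nuAlpha α β) htm]
      apply integral_mono hfint hind
      intro x
      simp only [Set.indicator_apply]
      split_ifs with hx
      · exact hf1 x
      · exact le_of_eq (hfz x (not_le.1 hx))
    have hev := hfm.eventually_lt_const
      (show ∫ x, f x ∂nuAlpha α β < ∫ x, f x ∂nuAlpha α β + θ2 by linarith)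
    filter_upwards [hev] with n hn j
    have hint1 : Integrable (fun ω => f ((b n)⁻¹ * X j ω)) P :=
      Stmt10Aux.int_bdd P ((hfc.measurable.comp (hXim n j)).aestronglyMeasurable)
        (C := 1) (fun ω => abs_le.2 ⟨by linarith [hf0 ((b n)⁻¹ * X j ω)], hf1 _⟩)
    have hchi : (P {ω | d ≤ |(b n)⁻¹ * X j ω|}).toReal
        ≤ ∫ ω, f ((b n)⁻¹ * X j ω) ∂P := by
      rw [← Stmt10Aux.int_chi P (hsetm d n j)]
      apply integral_mono (Stmt10Aux.chi_integrable P (hsetm d n j)) hint1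
      intro ω
      simp only [Set.indicator_apply]
      split_ifs with hω
      · rw [hfone _ hω]
      · exact hf0 _
    have hid : ∫ ω, f ((b n)⁻¹ * X j ω) ∂P = ∫ ω, f ((b n)⁻¹ * X 0 ω) ∂P := by
      have hm : Measurable fun x : ℝ => f ((b n)⁻¹ * x) :=
        hfc.measurable.comp (measurable_id.const_mul _)
      exact ((hIdent j).comp hm).integral_eq
    calc ρ ^ n * (P {ω | d ≤ |(b n)⁻¹ * X j ω|}).toReal
        ≤ ρ ^ n * ∫ ω, f ((b n)⁻¹ * X j ω) ∂P :=
          mul_le_mul_of_nonneg_left hchi (hρn n).le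
      _ = ρ ^ n * ∫ ω, f ((b n)⁻¹ * X 0 ω) ∂P := by rw [hid]
      _ ≤ ∫ x, f x ∂nuAlpha α β + θ2 := hn.le
      _ ≤ (nuAlpha α β {x | c ≤ |x|}).toReal + θ2 := by linarith
  -- global constant A
  obtain ⟨A, hApos, hAev⟩ : ∃ A : ℝ, 0 < A ∧ ∀ᶠ n in atTop, ∀ j : ℕ,
      ρ ^ n * (P {ω | δ0 ≤ |(b n)⁻¹ * X j ω|}).toReal ≤ A :=
    ⟨(nuAlpha α β {x | δ0/2 ≤ |x|}).toReal + 1, by positivity,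
      keytail (δ0/2) δ0 1 (by linarith) (by linarith) one_pos⟩
  -- pairwise independence product formula
  have hpairP : ∀ (n : ℕ) (i j : ℕ), i ≠ j → ∀ r1 r2 : ℝ,
      P ({ω | r1 ≤ |(b n)⁻¹ * X i ω|} ∩ {ω | r2 ≤ |(b n)⁻¹ * X j ω|})
        = P {ω | r1 ≤ |(b n)⁻¹ * X i ω|} * P {ω | r2 ≤ |(b n)⁻¹ * X j ω|} := by
    intro n i j hij r1 r2
    have h1 : MeasurableSet {x : ℝ | r1 ≤ |(b n)⁻¹ * x|} :=
      measurableSet_le measurable_const (measurable_id.const_mul _).abs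
    have h2 : MeasurableSet {x : ℝ | r2 ≤ |(b n)⁻¹ * x|} :=
      measurableSet_le measurable_const (measurable_id.const_mul _).abs
    exact (hIndep.indepFun hij).measure_inter_preimage_eq_mul _ _ h1 h2
  have hρtop : Tendsto (fun n : ℕ => ρ ^ n) atTop atTop :=
    tendsto_pow_atTop_atTop_of_one_lt hρ
  -- hMsmall
  have hMsmall : ∀ θ2 : ℝ, 0 < θ2 → ∃ M : ℝ, δ0 ≤ M ∧ ∀ᶠ n in atTop, ∀ j : ℕ,
      ρ ^ n * (P {ω | M ≤ |(b n)⁻¹ * X j ω|}).toReal ≤ θ2 := by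
    intro θ2 hθ2
    have hten := Stmt10Aux.nu_tail_tendsto (β := β) hα hβ₀ hβ₁
    have h2 : ∀ᶠ m : ℕ in atTop, nuAlpha α β {x | (m:ℝ) + 1 ≤ |x|} < ENNReal.ofReal (θ2/2) :=
      hten.eventually_lt_const (ENNReal.ofReal_pos.2 (by linarith))
    obtain ⟨m, hm1, hm2⟩ := (h2.and (eventually_ge_atTop ⌈δ0⌉₊)).exists
    have hδm : δ0 ≤ (m:ℝ) := by
      have := Nat.ceil_le.1 hm2
      exact_mod_cast this
    have hm0 : (0:ℝ) ≤ (m:ℝ) := Nat.cast_nonneg m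
    refine ⟨2 * ((m:ℝ) + 1), by linarith, ?_⟩
    have hkey := keytail ((m:ℝ)+1) (2*((m:ℝ)+1)) (θ2/2) (by linarith)
      (by nlinarith) (by linarith)
    filter_upwards [hkey] with n hn j
    have htr : (nuAlpha α β {x | (m:ℝ)+1 ≤ |x|}).toReal ≤ θ2/2 :=
      ENNReal.toReal_le_of_le_ofReal (by linarith) hm1.le
    have := hn j
    linarith
  -- hpair
  have hpair : ∀ (i : ℕ) (η θ2 : ℝ), 0 < η → 0 < θ2 → ∀ᶠ n in atTop, ∀ j, j ≠ i →
      ρ ^ n * (P ({ω | δ0 ≤ |(b n)⁻¹ * X i ω|} ∩ {ω | η ≤ |(b n)⁻¹ * X j ω|})).toReal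
        ≤ θ2 := by
    intro i η θ2 hη hθ2
    obtain ⟨Aη, hAηpos, hAηev⟩ : ∃ Aη : ℝ, 0 < Aη ∧ ∀ᶠ n in atTop, ∀ j : ℕ,
        ρ ^ n * (P {ω | η ≤ |(b n)⁻¹ * X j ω|}).toReal ≤ Aη :=
      ⟨(nuAlpha α β {x | η/2 ≤ |x|}).toReal + 1, by positivity,
        keytail (η/2) η 1 (by linarith) (by linarith) one_pos⟩
    have hev2 : ∀ᶠ n in atTop, Aη * (A/θ2) ≤ ρ ^ n := hρtop.eventually_ge_atTop _
    filter_upwards [hAev, hAηev, hev2] with n h1 h2 h3 j hji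
    rw [hpairP n i j (Ne.symm hji) δ0 η, ENNReal.toReal_mul]
    have hp : ρ^n * (P {ω | δ0 ≤ |(b n)⁻¹ * X i ω|}).toReal ≤ A := h1 i
    have hq : ρ^n * (P {ω | η ≤ |(b n)⁻¹ * X j ω|}).toReal ≤ Aη := h2 j
    have hp0 : (0:ℝ) ≤ (P {ω | δ0 ≤ |(b n)⁻¹ * X i ω|}).toReal := ENNReal.toReal_nonneg
    have hq0 : (0:ℝ) ≤ (P {ω | η ≤ |(b n)⁻¹ * X j ω|}).toReal := ENNReal.toReal_nonneg
    have hqb : (P {ω | η ≤ |(b n)⁻¹ * X j ω|}).toReal ≤ Aη / ρ^n := by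
      rw [le_div_iff₀ (hρn n)]
      nlinarith
    have h5 : Aη / ρ^n ≤ θ2 / A := by
      rw [div_le_div_iff₀ (hρn n) hApos]
      have h6 := mul_le_mul_of_nonneg_right h3 hθ2.le
      have h7 : Aη * (A/θ2) * θ2 = Aη * A := by field_simp
      linarith [h6, h7.ge, h7.le]
    calc ρ^n * ((P {ω | δ0 ≤ |(b n)⁻¹ * X i ω|}).toReal
            * (P {ω | η ≤ |(b n)⁻¹ * X j ω|}).toReal)
        = (ρ^n * (P {ω | δ0 ≤ |(b n)⁻¹ * X i ω|}).toReal)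
            * (P {ω | η ≤ |(b n)⁻¹ * X j ω|}).toReal := by ring
      _ ≤ A * (P {ω | η ≤ |(b n)⁻¹ * X j ω|}).toReal :=
          mul_le_mul_of_nonneg_right hp hq0
      _ ≤ A * (θ2/A) := by
          apply mul_le_mul_of_nonneg_left (le_trans hqb h5) hApos.le
      _ = θ2 := by field_simp
  -- definitions
  set an : ℕ → ℝ := fun n => ρ ^ n * ∫ ω, F (fun i => (b n)⁻¹ * X i ω) ∂P with handef
  set tt : ℕ → ℕ → ℝ := fun i n => ρ ^ n * ∫ ω,
      ({ω : Ω | δ0 ≤ |(b n)⁻¹ * X i ω|}.indicator (fun _ => (1:ℝ)) ω)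
        * F (fun k => (b n)⁻¹ * X k ω) ∂P with httdef
  set uu : ℕ → ℕ → ℝ := fun i n => ρ ^ n * ∫ ω,
      F (Function.update 0 i ((b n)⁻¹ * X i ω)) ∂P with huudef
  -- integrability
  have hFYint : ∀ n, Integrable (fun ω => F (fun k => (b n)⁻¹ * X k ω)) P := fun n =>
    Stmt10Aux.int_bdd P ((hFc.measurable.comp (hZmeas n)).aestronglyMeasurable)
      (fun ω => hC _)
  have hχFint : ∀ n i, Integrable (fun ω =>
      ({ω : Ω | δ0 ≤ |(b n)⁻¹ * X i ω|}.indicator (fun _ => (1:ℝ)) ω)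
        * F (fun k => (b n)⁻¹ * X k ω)) P := by
    intro n i
    apply Stmt10Aux.int_bdd P ((measurable_const.indicator (hsetm δ0 n i)).mul
      (hFc.measurable.comp (hZmeas n))).aestronglyMeasurable (C := C)
    intro ω
    simp only [Pi.mul_apply, Function.comp_apply]
    rw [abs_mul]
    have h1 := Stmt10Aux.chi_nonneg (A := {ω : Ω | δ0 ≤ |(b n)⁻¹ * X i ω|}) ω
    have h2 := Stmt10Aux.chi_le_one (A := {ω : Ω | δ0 ≤ |(b n)⁻¹ * X i ω|}) ω
    have h3 := hC (fun k => (b n)⁻¹ * X k ω)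
    rw [abs_of_nonneg h1]
    calc ({ω : Ω | δ0 ≤ |(b n)⁻¹ * X i ω|}.indicator (fun _ => (1:ℝ)) ω)
        * |F (fun k => (b n)⁻¹ * X k ω)|
        ≤ 1 * |F (fun k => (b n)⁻¹ * X k ω)| :=
          mul_le_mul_of_nonneg_right h2 (abs_nonneg _)
      _ ≤ C := by rw [one_mul]; exact h3
  have hGint : ∀ n i, Integrable (fun ω => F (Function.update 0 i ((b n)⁻¹ * X i ω))) P :=
    fun n i => Stmt10Aux.int_bdd P
      (((hFc.comp (Stmt10Aux.axis_cont i)).measurable.comp (hXim n i)).aestronglyMeasurable)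
      (fun ω => hC _)
  -- convergence of uu
  have hu : ∀ i ∈ s, Tendsto (uu i) atTop
      (𝓝 (∫ x, F (Function.update 0 i x) ∂nuAlpha α β)) := by
    intro i _
    have hGc : Continuous fun x : ℝ => F (Function.update 0 i x) :=
      hFc.comp (Stmt10Aux.axis_cont i)
    have hm := hmarg (fun x => F (Function.update 0 i x)) hGc ⟨C, fun x => hC _⟩
      ⟨δ0, hδ0, fun x hx => hGsmall i x hx⟩
    have heq : ∀ n, ρ ^ n * ∫ ω, F (Function.update 0 i ((b n)⁻¹ * X 0 ω)) ∂P
        = uu i n := by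
      intro n
      simp only [huudef]
      congr 1
      have hmeas : Measurable fun x : ℝ => F (Function.update 0 i ((b n)⁻¹ * x)) :=
        hGc.measurable.comp (measurable_id.const_mul _)
      exact (((hIdent i).comp hmeas).integral_eq).symm
    exact Tendsto.congr heq hm
  have husum : Tendsto (fun n => ∑ i ∈ s, uu i n) atTop
      (𝓝 (∑ i ∈ s, ∫ x, F (Function.update 0 i x) ∂nuAlpha α β)) :=
    tendsto_finset_sum _ hu
  -- step2
  have hstep2 : ∀ i ∈ s, Tendsto (fun n => tt i n - uu i n) atTop (𝓝 0) := by
    intro i _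
    have h2 := Stmt10Aux.step2 P ρ hρ F hFc C hC
      (fun n ω => fun k => (b n)⁻¹ * X k ω) hZmeas i δ0 hδ0 A hApos
      (hAev.mono fun n hn => hn i)
      (fun θ2 hθ2 => by
        obtain ⟨M, hM1, hM2⟩ := hMsmall θ2 hθ2
        exact ⟨M, hM1, hM2.mono fun n hn => hn i⟩)
      (hpair i)
    have heq : ∀ n, ρ ^ n * ∫ ω,
        ({ω : Ω | δ0 ≤ |(b n)⁻¹ * X i ω|}.indicator (fun _ => (1:ℝ)) ω)
          * (F (fun k => (b n)⁻¹ * X k ω)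
              - F (Function.update 0 i ((b n)⁻¹ * X i ω))) ∂P
        = tt i n - uu i n := by
      intro n
      simp only [httdef, huudef]
      rw [← mul_sub]
      congr 1
      rw [← integral_sub (hχFint n i) (hGint n i)]
      apply integral_congr_ae (ae_of_all _ ?_)
      intro ω
      by_cases hω : ω ∈ {ω : Ω | δ0 ≤ |(b n)⁻¹ * X i ω|}
      · rw [Set.indicator_of_mem hω, one_mul, one_mul]
      · rw [Set.indicator_of_notMem hω, zero_mul, zero_mul]
        rw [hGsmall i _ (not_le.1 hω)]
        ring
    exact Tendsto.congr heq h2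
  -- step1
  have hstep1 : Tendsto (fun n => an n - ∑ i ∈ s, tt i n) atTop (𝓝 0) := by
    apply squeeze_zero_norm' (a := fun n => C * ((s.card:ℝ))^2 * A^2 * (ρ^n)⁻¹)
    · filter_upwards [hAev] with n hn
      -- split
      have hsplit : an n - ∑ i ∈ s, tt i n = ρ^n * ∫ ω,
          (F (fun k => (b n)⁻¹ * X k ω) - ∑ i ∈ s,
            ({ω : Ω | δ0 ≤ |(b n)⁻¹ * X i ω|}.indicator (fun _ => (1:ℝ)) ω)
              * F (fun k => (b n)⁻¹ * X k ω)) ∂P := by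
        simp only [handef, httdef]
        rw [← Finset.mul_sum, ← mul_sub]
        congr 1
        rw [← integral_finset_sum s (fun i _ => hχFint n i)]
        exact (integral_sub (hFYint n)
          (integrable_finset_sum s fun i _ => hχFint n i)).symm
      -- pointwise bound
      have hpw : ∀ ω, |F (fun k => (b n)⁻¹ * X k ω) - ∑ i ∈ s,
          ({ω : Ω | δ0 ≤ |(b n)⁻¹ * X i ω|}.indicator (fun _ => (1:ℝ)) ω)
            * F (fun k => (b n)⁻¹ * X k ω)|
          ≤ C * ∑ i ∈ s, ∑ j ∈ s.erase i,
              (({ω : Ω | δ0 ≤ |(b n)⁻¹ * X i ω|}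
                ∩ {ω : Ω | δ0 ≤ |(b n)⁻¹ * X j ω|}).indicator (fun _ => (1:ℝ)) ω) := by
        intro ω
        have hinter : ∀ i j : ℕ,
            (({ω : Ω | δ0 ≤ |(b n)⁻¹ * X i ω|}
              ∩ {ω : Ω | δ0 ≤ |(b n)⁻¹ * X j ω|}).indicator (fun _ => (1:ℝ)) ω)
            = ({ω : Ω | δ0 ≤ |(b n)⁻¹ * X i ω|}.indicator (fun _ => (1:ℝ)) ω)
              * ({ω : Ω | δ0 ≤ |(b n)⁻¹ * X j ω|}.indicator (fun _ => (1:ℝ)) ω) := by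
          intro i j
          by_cases hi : ω ∈ {ω : Ω | δ0 ≤ |(b n)⁻¹ * X i ω|} <;>
            by_cases hj : ω ∈ {ω : Ω | δ0 ≤ |(b n)⁻¹ * X j ω|} <;>
            simp_all [Set.indicator_apply, Set.mem_inter_iff]
        have hsq : ∀ i : ℕ,
            ({ω : Ω | δ0 ≤ |(b n)⁻¹ * X i ω|}.indicator (fun _ => (1:ℝ)) ω)
              * ({ω : Ω | δ0 ≤ |(b n)⁻¹ * X i ω|}.indicator (fun _ => (1:ℝ)) ω)
            = ({ω : Ω | δ0 ≤ |(b n)⁻¹ * X i ω|}.indicator (fun _ => (1:ℝ)) ω) := by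
          intro i
          by_cases hi : ω ∈ {ω : Ω | δ0 ≤ |(b n)⁻¹ * X i ω|} <;>
            simp [Set.indicator_apply, hi]
        set S : ℝ := ∑ i ∈ s,
          ({ω : Ω | δ0 ≤ |(b n)⁻¹ * X i ω|}.indicator (fun _ => (1:ℝ)) ω) with hSdef
        have hT : ∑ i ∈ s, ∑ j ∈ s.erase i,
            (({ω : Ω | δ0 ≤ |(b n)⁻¹ * X i ω|}
              ∩ {ω : Ω | δ0 ≤ |(b n)⁻¹ * X j ω|}).indicator (fun _ => (1:ℝ)) ω)
            = S * S - S := by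
          calc ∑ i ∈ s, ∑ j ∈ s.erase i,
              (({ω : Ω | δ0 ≤ |(b n)⁻¹ * X i ω|}
                ∩ {ω : Ω | δ0 ≤ |(b n)⁻¹ * X j ω|}).indicator (fun _ => (1:ℝ)) ω)
              = ∑ i ∈ s, ∑ j ∈ s.erase i,
                ({ω : Ω | δ0 ≤ |(b n)⁻¹ * X i ω|}.indicator (fun _ => (1:ℝ)) ω)
                  * ({ω : Ω | δ0 ≤ |(b n)⁻¹ * X j ω|}.indicator (fun _ => (1:ℝ)) ω) :=
                Finset.sum_congr rfl fun i _ => Finset.sum_congr rfl fun j _ => hinter i j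
            _ = ∑ i ∈ s,
                ({ω : Ω | δ0 ≤ |(b n)⁻¹ * X i ω|}.indicator (fun _ => (1:ℝ)) ω)
                  * ∑ j ∈ s.erase i,
                    ({ω : Ω | δ0 ≤ |(b n)⁻¹ * X j ω|}.indicator (fun _ => (1:ℝ)) ω) :=
                Finset.sum_congr rfl fun i _ => (Finset.mul_sum _ _ _).symm
            _ = ∑ i ∈ s,
                ({ω : Ω | δ0 ≤ |(b n)⁻¹ * X i ω|}.indicator (fun _ => (1:ℝ)) ω)
                  * (S - ({ω : Ω | δ0 ≤ |(b n)⁻¹ * X i ω|}.indicator (fun _ => (1:ℝ)) ω)) := by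
                apply Finset.sum_congr rfl
                intro i hi
                rw [Finset.sum_erase_eq_sub hi]
            _ = ∑ i ∈ s,
                (({ω : Ω | δ0 ≤ |(b n)⁻¹ * X i ω|}.indicator (fun _ => (1:ℝ)) ω) * S
                  - ({ω : Ω | δ0 ≤ |(b n)⁻¹ * X i ω|}.indicator (fun _ => (1:ℝ)) ω)) :=
                Finset.sum_congr rfl fun i _ => by rw [mul_sub, hsq i]
            _ = S * S - S := by
                rw [Finset.sum_sub_distrib, ← Finset.sum_mul]
        have hSnat : ∃ N : ℕ, S = (N:ℝ) := by
          refine ⟨(s.filter fun i => ω ∈ {ω : Ω | δ0 ≤ |(b n)⁻¹ * X i ω|}).card, ?_⟩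
          rw [hSdef]
          rw [show (∑ i ∈ s,
            ({ω : Ω | δ0 ≤ |(b n)⁻¹ * X i ω|}.indicator (fun _ => (1:ℝ)) ω))
            = ∑ i ∈ s, (if ω ∈ {ω : Ω | δ0 ≤ |(b n)⁻¹ * X i ω|} then (1:ℝ) else 0) from
            Finset.sum_congr rfl fun i _ => by rw [Set.indicator_apply]]
          exact Finset.sum_boole _ _
        obtain ⟨N, hN⟩ := hSnat
        have hSS : S ≤ S * S := by
          rw [hN]
          have : N ≤ N * N := by
            rcases Nat.eq_zero_or_pos N with h | h
            · simp [h]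
            · exact Nat.le_mul_of_pos_left N h
          exact_mod_cast this
        rw [show (∑ i ∈ s,
            ({ω : Ω | δ0 ≤ |(b n)⁻¹ * X i ω|}.indicator (fun _ => (1:ℝ)) ω)
              * F (fun k => (b n)⁻¹ * X k ω)) = S * F (fun k => (b n)⁻¹ * X k ω) from
          (Finset.sum_mul _ _ _).symm]
        rw [hT]
        by_cases hF0 : F (fun k => (b n)⁻¹ * X k ω) = 0
        · rw [hF0]
          simp only [mul_zero, sub_zero, abs_zero]
          exact mul_nonneg hC0 (sub_nonneg.2 hSS)
        · have hS1 : 1 ≤ S := by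
            have hex : ∃ j ∈ s, δ0 ≤ |(b n)⁻¹ * X j ω| := by
              by_contra hno
              push_neg at hno
              exact hF0 (hsupp _ fun j hj => hno j hj)
            obtain ⟨j0, hj0s, hj0⟩ := hex
            have h1 : ({ω : Ω | δ0 ≤ |(b n)⁻¹ * X j0 ω|}.indicator (fun _ => (1:ℝ)) ω)
                = 1 := Set.indicator_of_mem
                  (show ω ∈ {ω : Ω | δ0 ≤ |(b n)⁻¹ * X j0 ω|} from hj0) _
            have hss := Finset.single_le_sum (f := fun i =>
              ({ω : Ω | δ0 ≤ |(b n)⁻¹ * X i ω|}.indicator (fun _ => (1:ℝ)) ω))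
              (fun k _ => Stmt10Aux.chi_nonneg ω) hj0s
            rw [hSdef]
            simpa only [h1] using hss
          rw [show F (fun k => (b n)⁻¹ * X k ω)
              - S * F (fun k => (b n)⁻¹ * X k ω)
              = F (fun k => (b n)⁻¹ * X k ω) * (1 - S) from by ring, abs_mul]
          rw [show |1 - S| = S - 1 from by rw [abs_of_nonpos (by linarith)]; ring]
          have hFle := hC (fun k => (b n)⁻¹ * X k ω)
          have hFnn := abs_nonneg (F (fun k => (b n)⁻¹ * X k ω))
          nlinarith [mul_nonneg (sub_nonneg.2 hS1) (sub_nonneg.2 hFle),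
            mul_nonneg (mul_nonneg hC0 (sub_nonneg.2 hS1)) (sub_nonneg.2 hS1)]
      -- integrate the bound
      have hbint : Integrable (fun ω => C * ∑ i ∈ s, ∑ j ∈ s.erase i,
          (({ω : Ω | δ0 ≤ |(b n)⁻¹ * X i ω|}
            ∩ {ω : Ω | δ0 ≤ |(b n)⁻¹ * X j ω|}).indicator (fun _ => (1:ℝ)) ω)) P := by
        apply Integrable.const_mul
        apply integrable_finset_sum
        intro i _
        apply integrable_finset_sum
        intro j _
        exact Stmt10Aux.chi_integrable P ((hsetm δ0 n i).inter (hsetm δ0 n j))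
      have hdint : Integrable (fun ω => F (fun k => (b n)⁻¹ * X k ω) - ∑ i ∈ s,
          ({ω : Ω | δ0 ≤ |(b n)⁻¹ * X i ω|}.indicator (fun _ => (1:ℝ)) ω)
            * F (fun k => (b n)⁻¹ * X k ω)) P :=
        (hFYint n).sub (integrable_finset_sum s fun i _ => hχFint n i)
      have hintle : |∫ ω, (F (fun k => (b n)⁻¹ * X k ω) - ∑ i ∈ s,
          ({ω : Ω | δ0 ≤ |(b n)⁻¹ * X i ω|}.indicator (fun _ => (1:ℝ)) ω)
            * F (fun k => (b n)⁻¹ * X k ω)) ∂P|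
          ≤ C * ∑ i ∈ s, ∑ j ∈ s.erase i,
              (P ({ω : Ω | δ0 ≤ |(b n)⁻¹ * X i ω|}
                ∩ {ω : Ω | δ0 ≤ |(b n)⁻¹ * X j ω|})).toReal := by
        have hval : ∫ ω, (C * ∑ i ∈ s, ∑ j ∈ s.erase i,
            (({ω : Ω | δ0 ≤ |(b n)⁻¹ * X i ω|}
              ∩ {ω : Ω | δ0 ≤ |(b n)⁻¹ * X j ω|}).indicator (fun _ => (1:ℝ)) ω)) ∂P
            = C * ∑ i ∈ s, ∑ j ∈ s.erase i,
              (P ({ω : Ω | δ0 ≤ |(b n)⁻¹ * X i ω|}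
                ∩ {ω : Ω | δ0 ≤ |(b n)⁻¹ * X j ω|})).toReal := by
          rw [integral_const_mul]
          congr 1
          rw [integral_finset_sum _ (fun i _ => integrable_finset_sum _
            (fun j _ => Stmt10Aux.chi_integrable P ((hsetm δ0 n i).inter (hsetm δ0 n j))))]
          apply Finset.sum_congr rfl
          intro i _
          rw [integral_finset_sum _ (fun j _ =>
            Stmt10Aux.chi_integrable P ((hsetm δ0 n i).inter (hsetm δ0 n j)))]
          exact Finset.sum_congr rfl fun j _ =>
            Stmt10Aux.int_chi P ((hsetm δ0 n i).inter (hsetm δ0 n j))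
        rw [← hval]
        have h1 := norm_integral_le_integral_norm (μ := P)
          (f := fun ω => F (fun k => (b n)⁻¹ * X k ω) - ∑ i ∈ s,
            ({ω : Ω | δ0 ≤ |(b n)⁻¹ * X i ω|}.indicator (fun _ => (1:ℝ)) ω)
              * F (fun k => (b n)⁻¹ * X k ω))
        simp only [Real.norm_eq_abs] at h1
        exact le_trans h1 (integral_mono hdint.abs hbint hpw)
      -- pair probabilities
      have hpp : ∀ i ∈ s, ∀ j ∈ s.erase i,
          ρ^n * (P ({ω : Ω | δ0 ≤ |(b n)⁻¹ * X i ω|}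
            ∩ {ω : Ω | δ0 ≤ |(b n)⁻¹ * X j ω|})).toReal ≤ A^2 * (ρ^n)⁻¹ := by
        intro i _ j hj
        rw [hpairP n i j (Finset.ne_of_mem_erase hj).symm δ0 δ0, ENNReal.toReal_mul]
        have h1 := hn i
        have h2 := hn j
        have hp0 : (0:ℝ) ≤ (P {ω | δ0 ≤ |(b n)⁻¹ * X i ω|}).toReal := ENNReal.toReal_nonneg
        have hq0 : (0:ℝ) ≤ (P {ω | δ0 ≤ |(b n)⁻¹ * X j ω|}).toReal := ENNReal.toReal_nonneg
        rw [show A^2 * (ρ^n)⁻¹ = A^2 / ρ^n from by rw [div_eq_mul_inv],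
          le_div_iff₀ (hρn n)]
        nlinarith [mul_le_mul h1 h2 (mul_nonneg (hρn n).le hq0) hApos.le]
      -- final estimate
      rw [hsplit, Real.norm_eq_abs, abs_mul, abs_of_pos (hρn n)]
      have hQnn : (0:ℝ) ≤ ∑ i ∈ s, ∑ j ∈ s.erase i,
          (P ({ω : Ω | δ0 ≤ |(b n)⁻¹ * X i ω|}
            ∩ {ω : Ω | δ0 ≤ |(b n)⁻¹ * X j ω|})).toReal :=
        Finset.sum_nonneg fun i _ => Finset.sum_nonneg fun j _ => ENNReal.toReal_nonneg
      have hQ : ρ^n * ∑ i ∈ s, ∑ j ∈ s.erase i,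
          (P ({ω : Ω | δ0 ≤ |(b n)⁻¹ * X i ω|}
            ∩ {ω : Ω | δ0 ≤ |(b n)⁻¹ * X j ω|})).toReal
          ≤ ((s.card:ℝ))^2 * (A^2 * (ρ^n)⁻¹) := by
        rw [Finset.mul_sum]
        calc ∑ i ∈ s, ρ^n * ∑ j ∈ s.erase i,
            (P ({ω : Ω | δ0 ≤ |(b n)⁻¹ * X i ω|}
              ∩ {ω : Ω | δ0 ≤ |(b n)⁻¹ * X j ω|})).toReal
            = ∑ i ∈ s, ∑ j ∈ s.erase i, ρ^n *
              (P ({ω : Ω | δ0 ≤ |(b n)⁻¹ * X i ω|}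
                ∩ {ω : Ω | δ0 ≤ |(b n)⁻¹ * X j ω|})).toReal := by
              apply Finset.sum_congr rfl
              intro i _
              exact Finset.mul_sum _ _ _
          _ ≤ ∑ i ∈ s, ∑ _j ∈ s.erase i, A^2 * (ρ^n)⁻¹ := by
              apply Finset.sum_le_sum
              intro i hi
              exact Finset.sum_le_sum fun j hj => hpp i hi j hj
          _ = ∑ i ∈ s, ((s.erase i).card : ℝ) * (A^2 * (ρ^n)⁻¹) := by
              apply Finset.sum_congr rfl
              intro i _
              rw [Finset.sum_const, nsmul_eq_mul]
          _ ≤ ∑ _i ∈ s, ((s.card:ℝ)) * (A^2 * (ρ^n)⁻¹) := by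
              apply Finset.sum_le_sum
              intro i _
              apply mul_le_mul_of_nonneg_right
              · exact_mod_cast Finset.card_erase_le
              · positivity
          _ = ((s.card:ℝ)) * (((s.card:ℝ)) * (A^2 * (ρ^n)⁻¹)) := by
              rw [Finset.sum_const, nsmul_eq_mul]
          _ = ((s.card:ℝ))^2 * (A^2 * (ρ^n)⁻¹) := by ring
      calc ρ^n * |∫ ω, (F (fun k => (b n)⁻¹ * X k ω) - ∑ i ∈ s,
          ({ω : Ω | δ0 ≤ |(b n)⁻¹ * X i ω|}.indicator (fun _ => (1:ℝ)) ω)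
            * F (fun k => (b n)⁻¹ * X k ω)) ∂P|
          ≤ ρ^n * (C * ∑ i ∈ s, ∑ j ∈ s.erase i,
              (P ({ω : Ω | δ0 ≤ |(b n)⁻¹ * X i ω|}
                ∩ {ω : Ω | δ0 ≤ |(b n)⁻¹ * X j ω|})).toReal) :=
            mul_le_mul_of_nonneg_left hintle (hρn n).le
        _ = C * (ρ^n * ∑ i ∈ s, ∑ j ∈ s.erase i,
              (P ({ω : Ω | δ0 ≤ |(b n)⁻¹ * X i ω|}
                ∩ {ω : Ω | δ0 ≤ |(b n)⁻¹ * X j ω|})).toReal) := by ring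
        _ ≤ C * (((s.card:ℝ))^2 * (A^2 * (ρ^n)⁻¹)) :=
            mul_le_mul_of_nonneg_left hQ hC0
        _ = C * ((s.card:ℝ))^2 * A^2 * (ρ^n)⁻¹ := by ring
    · have h1 : Tendsto (fun n : ℕ => (ρ⁻¹)^n) atTop (𝓝 0) :=
        tendsto_pow_atTop_nhds_zero_of_lt_one (by positivity) (inv_lt_one_of_one_lt₀ hρ)
      have h2 := h1.const_mul (C * ((s.card:ℝ))^2 * A^2)
      simp only [mul_zero] at h2
      apply h2.congr
      intro n
      rw [inv_pow]
  -- final assembly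
  rw [Stmt10Aux.lamIid_integral hα hβ₀ hβ₁ F hFc C hC s δ0 hδ0 hsupp]
  have hdecomp : an = fun n =>
      (∑ i ∈ s, uu i n) + ((an n - ∑ i ∈ s, tt i n) + (∑ i ∈ s, (tt i n - uu i n))) := by
    funext n
    rw [Finset.sum_sub_distrib]
    ring
  show Tendsto an atTop _
  rw [hdecomp]
  have hfin := husum.add (hstep1.add (tendsto_finset_sum s fun i hi => hstep2 i hi))
  simpa using hfin
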